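/- With the same setup as before (γ a reduced closed path with v_γ ≥ 2, s a labeling, N ≥ 2 the number of connected components of the agreement graph G, and C the number of indices i with s(γ(i)) ≠ s(γ(i+1))): if h denotes the number of connected components of G consisting of a single vertex, then C ≥ N + h. -/

import Mathlib

/-- The agreement graph on the vertex set of the closed path `γ` (its image on `{0,…,ℓ}`):
`z` and `z'` are adjacent iff they carry the same label under `s` and form a consecutive
pair of the path. -/
def agreementGraph (p ℓ : ℕ) (γ : ℕ → Fin p) {X : Type*} (s : Fin p → X) :
    SimpleGraph ↥(γ '' Set.Iic ℓ) where
  Adj z z' := z ≠ z' ∧ s z.1 = s z'.1 ∧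
    ∃ i < ℓ, ({γ i, γ (i + 1)} : Set (Fin p)) = {z.1, z'.1}
  symm := by
    constructor
    rintro z z' ⟨h1, h2, i, hi, h3⟩
    exact ⟨h1.symm, h2.symm, ⟨i, hi, by rw [h3]; exact Set.pair_comm _ _⟩⟩
  loopless := ⟨fun z h => h.1 rfl⟩

theorem stmt_7 (p ℓ : ℕ) (γ : ℕ → Fin p) (hclosed : γ ℓ = γ 0)
    (hcard : 2 ≤ (γ '' Set.Iic ℓ).ncard)
    (hfib : ∀ z ∈ γ '' Set.Iic ℓ, 2 ≤ {i | i < ℓ ∧ γ i = z}.ncard)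
    (hnoconsec : ∀ i < ℓ, γ i ≠ γ (i + 1))
    {X : Type*} (s : Fin p → X)
    (N : ℕ) (hN : N = Nat.card (agreementGraph p ℓ γ s).ConnectedComponent)
    (h : ℕ)
    (hh : h = Nat.card {c : (agreementGraph p ℓ γ s).ConnectedComponent // c.supp.ncard = 1})
    (C : ℕ) (hC : C = {i | i < ℓ ∧ s (γ i) ≠ s (γ (i + 1))}.ncard)
    (hN2 : 2 ≤ N) :
    N + h ≤ C := by
  classical
  set G := agreementGraph p ℓ γ s with hG
  have hVfin : (γ '' Set.Iic ℓ).Finite := (Set.finite_Iic ℓ).image γ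
  haveI : Fintype ↥(γ '' Set.Iic ℓ) := hVfin.fintype
  haveI : Fintype G.ConnectedComponent := Fintype.ofFinite _
  have hmem : ∀ i, i ≤ ℓ → γ i ∈ γ '' Set.Iic ℓ := fun i hi => ⟨i, hi, rfl⟩
  -- ℓ ≥ 1
  have hℓ : 1 ≤ ℓ := by
    by_contra hl
    push_neg at hl
    interval_cases ℓ
    have : γ '' Set.Iic 0 = {γ 0} := by
      ext x; constructor
      · rintro ⟨i, hi, rfl⟩; simp at hi; subst hi; rfl
      · rintro rfl; exact ⟨0, Set.mem_Iic.mpr le_rfl, rfl⟩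
    rw [this, Set.ncard_singleton] at hcard; omega
  -- the component of γ i
  set F : ℕ → G.ConnectedComponent :=
    fun i => G.connectedComponentMk ⟨γ (min i ℓ), hmem _ (min_le_right _ _)⟩ with hFdef
  have hFmk : ∀ i, i ≤ ℓ → ∀ z : ↥(γ '' Set.Iic ℓ), z.1 = γ i →
      F i = G.connectedComponentMk z := by
    intro i hi z hz
    have hmi : min i ℓ = i := min_eq_left hi
    simp only [hFdef]
    congr 1
    exact Subtype.ext (by rw [hz]; exact congrArg γ hmi)
  have hadj : ∀ i, i < ℓ → s (γ i) = s (γ (i + 1)) → F i = F (i + 1) := by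
    intro i hi hs
    have h1 : F i = G.connectedComponentMk ⟨γ i, hmem _ hi.le⟩ := hFmk i hi.le _ rfl
    have h2 : F (i+1) = G.connectedComponentMk ⟨γ (i+1), hmem _ hi⟩ := hFmk (i+1) hi _ rfl
    rw [h1, h2]
    refine SimpleGraph.ConnectedComponent.sound (SimpleGraph.Adj.reachable ?_)
    show _ ≠ _ ∧ _
    refine ⟨?_, hs, ⟨i, hi, rfl⟩⟩
    intro he
    exact hnoconsec i hi (congrArg Subtype.val he)
  have hF0ℓ : F ℓ = F 0 := by
    have := hFmk ℓ le_rfl ⟨γ 0, hmem 0 (by omega)⟩ hclosed.symm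
    rw [this, hFmk 0 (by omega) ⟨γ 0, hmem 0 (by omega)⟩ rfl]
  -- every component is attained at some i < ℓ
  have hsurj : ∀ c : G.ConnectedComponent, ∃ i, i < ℓ ∧ F i = c := by
    intro c
    obtain ⟨z, rfl⟩ := c.exists_rep
    obtain ⟨i, hi, hz⟩ := z.2
    have hi' : i ≤ ℓ := hi
    rcases lt_or_eq_of_le hi' with hlt | rfl
    · exact ⟨i, hlt, hFmk i hi' z hz.symm⟩
    · refine ⟨0, hℓ, hFmk 0 (by omega) z ?_⟩
      rw [← hz, hclosed]
  -- every component has an "exit"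
  have hexit : ∀ c : G.ConnectedComponent, ∃ i, i < ℓ ∧ F i = c ∧ F (i + 1) ≠ c := by
    intro c
    by_contra hcon
    push_neg at hcon
    have hstep : ∀ i, i < ℓ → F i = c → F (i + 1) = c := fun i hi hc => hcon i hi hc
    obtain ⟨i₀, hi₀, hFi₀⟩ := hsurj c
    have hup : ∀ k, i₀ + k ≤ ℓ → F (i₀ + k) = c := by
      intro k
      induction k with
      | zero => intro _; exact hFi₀
      | succ n ih =>
        intro hk
        have h1 : i₀ + n < ℓ := by omega
        exact hstep (i₀ + n) h1 (ih (by omega))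
    have hFℓ : F ℓ = c := by
      have := hup (ℓ - i₀) (by omega)
      rwa [show i₀ + (ℓ - i₀) = ℓ by omega] at this
    have hF0 : F 0 = c := hF0ℓ ▸ hFℓ
    have hall : ∀ k, k ≤ ℓ → F k = c := by
      intro k
      induction k with
      | zero => intro _; exact hF0
      | succ n ih => intro hk; exact hstep n (by omega) (ih (by omega))
    have hsub : ∀ c' : G.ConnectedComponent, c' = c := by
      intro c'
      obtain ⟨i, hi, hFi⟩ := hsurj c'
      rw [← hFi]; exact hall i hi.le
    have : Fintype.card G.ConnectedComponent ≤ 1 :=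
      Fintype.card_le_one_iff.mpr (fun a b => (hsub a).trans (hsub b).symm)
    rw [hN, Nat.card_eq_fintype_card] at hN2
    omega
  set D : Finset ℕ := (Finset.range ℓ).filter (fun i => F i ≠ F (i + 1)) with hD
  -- every component's fiber in D is nonempty
  have hfib1 : ∀ c : G.ConnectedComponent, 1 ≤ (D.filter (fun i => F i = c)).card := by
    intro c
    obtain ⟨i, hi, hFi, hFi'⟩ := hexit c
    refine Finset.card_pos.mpr ⟨i, ?_⟩
    simp only [hD, Finset.mem_filter, Finset.mem_range]
    exact ⟨⟨hi, fun he => hFi' (he ▸ hFi)⟩, hFi⟩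
  -- singleton components have fiber of size ≥ 2
  have hfib2 : ∀ c : G.ConnectedComponent, c.supp.ncard = 1 →
      2 ≤ (D.filter (fun i => F i = c)).card := by
    intro c hc
    obtain ⟨z, hz⟩ := Set.ncard_eq_one.mp hc
    have hzc : G.connectedComponentMk z = c := by
      have : z ∈ c.supp := by rw [hz]; rfl
      exact this
    have hfin : {i | i < ℓ ∧ γ i = z.1}.Finite :=
      (Set.finite_Iio ℓ).subset (fun i hi => hi.1)
    obtain ⟨a, ha, b, hb, hab⟩ := (Set.one_lt_ncard hfin).mp (by
      have := hfib z.1 z.2; omega)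
    have key : ∀ i, i < ℓ → γ i = z.1 → i ∈ D.filter (fun i => F i = c) := by
      intro i hi hγi
      have hFi : F i = c := by rw [hFmk i hi.le z hγi.symm, hzc]
      have hFi' : F (i + 1) ≠ c := by
        intro he
        have : (⟨γ (i+1), hmem _ hi⟩ : ↥(γ '' Set.Iic ℓ)) ∈ c.supp := by
          have := hFmk (i+1) hi ⟨γ (i+1), hmem _ hi⟩ rfl
          show G.connectedComponentMk _ = c
          rw [← this, he]
        rw [hz, Set.mem_singleton_iff] at this
        apply hnoconsec i hi
        rw [hγi, ← congrArg Subtype.val this]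
      simp only [hD, Finset.mem_filter, Finset.mem_range]
      exact ⟨⟨hi, fun he => hFi' (he ▸ hFi)⟩, hFi⟩
    exact Finset.one_lt_card.mpr ⟨a, key a ha.1 ha.2, b, key b hb.1 hb.2, hab⟩
  -- counting
  have hsum : D.card = ∑ c : G.ConnectedComponent, (D.filter (fun i => F i = c)).card :=
    Finset.card_eq_sum_card_fiberwise (fun i _ => Finset.mem_univ (F i))
  have hlow : N + h ≤ D.card := by
    rw [hsum]
    have : ∑ c : G.ConnectedComponent, (1 + if c.supp.ncard = 1 then 1 else 0)
        ≤ ∑ c : G.ConnectedComponent, (D.filter (fun i => F i = c)).card := by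
      refine Finset.sum_le_sum (fun c _ => ?_)
      by_cases hc : c.supp.ncard = 1
      · simp only [hc, if_true]; exact hfib2 c hc
      · simp only [hc, if_false]; simpa using hfib1 c
    refine le_trans (le_of_eq ?_) this
    rw [Finset.sum_add_distrib, Finset.sum_const, smul_eq_mul, mul_one,
      ← Finset.sum_filter, hN, Nat.card_eq_fintype_card, hh, Nat.card_eq_fintype_card,
      Fintype.card_subtype]
    rw [← Finset.card_eq_sum_ones]
    rfl
  -- D ⊆ the set counted by C
  have hCeq : C = ((Finset.range ℓ).filter (fun i => s (γ i) ≠ s (γ (i + 1)))).card := by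
    rw [hC, ← Set.ncard_coe_finset]
    congr 1
    ext i
    simp [Finset.mem_filter, Finset.mem_range]
  have hDsub : D ⊆ (Finset.range ℓ).filter (fun i => s (γ i) ≠ s (γ (i + 1))) := by
    intro i hi
    simp only [hD, Finset.mem_filter, Finset.mem_range] at hi ⊢
    exact ⟨hi.1, fun hs => hi.2 (hadj i hi.1 hs)⟩
  calc N + h ≤ D.card := hlow
    _ ≤ _ := Finset.card_le_card hDsub
    _ = C := hCeq.symm
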